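/- Lower-bound half of the optimistic edit-distance formula (Equation (15)): Let C be a type with decidable equality, and let t, y, z be lists over C. Then there exists k with 0 ≤ k ≤ |t| such that the Levenshtein distance (with unit insertion, deletion and substitution costs) between y and t.take k is at most the Levenshtein distance between y ++ z and t; in particular, min_{0 ≤ k ≤ |t|} ρ_levenshtein(y, t.take k) ≤ ρ_levenshtein(y ++ z, t) for every continuation z. -/

import Mathlib

/-- Re-introduced: Mathlib's former `Mathlib/Data/List/EditDistance/Defs.lean`. -/
structure Levenshtein.Cost (α β δ : Type*) where
  delete : α → δ
  insert : β → δ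
  substitute : α → β → δ

def Levenshtein.defaultCost {α : Type*} [DecidableEq α] : Levenshtein.Cost α α ℕ where
  delete _ := 1
  insert _ := 1
  substitute a b := if a = b then 0 else 1

def Levenshtein.impl {α β δ : Type*} [AddZeroClass δ] [Min δ] (C : Levenshtein.Cost α β δ)
    (xs : List α) (y : β) (d : {r : List δ // 0 < r.length}) : {r : List δ // 0 < r.length} :=
  let ⟨ds, w⟩ := d
  xs.zip (ds.zip ds.tail) |>.foldr
    (init := ⟨[C.insert y + ds.getLast (List.ne_nil_of_length_pos w)], by simp⟩)
    (fun ⟨x, d₀, d₁⟩ ⟨r, w⟩ =>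
      ⟨min (C.delete x + r[0]) (min (C.insert y + d₀) (C.substitute x y + d₁)) :: r, by simp⟩)

def suffixLevenshtein {α β δ : Type*} [AddZeroClass δ] [Min δ] (C : Levenshtein.Cost α β δ)
    (xs : List α) (ys : List β) : {r : List δ // 0 < r.length} :=
  ys.foldr
    (Levenshtein.impl C xs)
    (xs.foldr (init := ⟨[0], by simp⟩) (fun a ⟨r, w⟩ => ⟨(C.delete a + r[0]) :: r, by simp⟩))

def levenshtein {α β δ : Type*} [AddZeroClass δ] [Min δ] (C : Levenshtein.Cost α β δ)
    (xs : List α) (ys : List β) : δ :=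
  let ⟨r, w⟩ := suffixLevenshtein C xs ys
  r[0]


theorem lvp_head_eq {δ : Type*} (L r : List δ) (a : δ) (h : 0 < L.length)
    (e : L = a :: r) : L[0]'h = a := by
  subst e; rfl

theorem lvp_getLast_eq {δ : Type*} (L : List δ) (a : δ) (h : L ≠ [])
    (e : L = [a]) : L.getLast h = a := by
  subst e; rfl

theorem lvp_impl_cons {α β δ : Type*} [AddZeroClass δ] [Min δ] (C : Levenshtein.Cost α β δ)
    (x : α) (xs : List α) (y : β) (d : δ) (ds : List δ) (w : 0 < (d :: ds).length)
    (w' : 0 < ds.length) :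
    (Levenshtein.impl C (x :: xs) y ⟨d :: ds, w⟩).1 =
      min (C.delete x + (Levenshtein.impl C xs y ⟨ds, w'⟩).1[0]'(Levenshtein.impl C xs y ⟨ds, w'⟩).2)
        (min (C.insert y + d) (C.substitute x y + ds[0])) ::
        (Levenshtein.impl C xs y ⟨ds, w'⟩).1 :=
  match ds, w' with | _ :: _, _ => rfl

theorem lvp_sl_nil {α β δ : Type*} [AddZeroClass δ] [Min δ] (C : Levenshtein.Cost α β δ)
    (ys : List β) : (suffixLevenshtein C ([] : List α) ys).1 = [levenshtein C [] ys] := by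
  cases ys with
  | nil => rfl
  | cons y ys => rfl

theorem lvp_sl_cons {α β δ : Type*} [AddZeroClass δ] [Min δ] (C : Levenshtein.Cost α β δ)
    (x : α) (xs : List α) (ys : List β) :
    (suffixLevenshtein C (x :: xs) ys).1 =
      levenshtein C (x :: xs) ys :: (suffixLevenshtein C xs ys).1 := by
  induction ys with
  | nil => rfl
  | cons y ys ih =>
    have hD : suffixLevenshtein C (x :: xs) ys =
        ⟨levenshtein C (x :: xs) ys :: (suffixLevenshtein C xs ys).1, by simp⟩ := Subtype.ext ih
    have key : (Levenshtein.impl C (x :: xs) y (suffixLevenshtein C (x :: xs) ys)).1 =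
        min (C.delete x + levenshtein C xs (y :: ys))
          (min (C.insert y + levenshtein C (x :: xs) ys) (C.substitute x y + levenshtein C xs ys)) ::
          (suffixLevenshtein C xs (y :: ys)).1 := by
      rw [hD]; exact lvp_impl_cons C x xs y _ _ (by simp) (suffixLevenshtein C xs ys).2
    have e := lvp_head_eq _ _ _ (Levenshtein.impl C (x :: xs) y (suffixLevenshtein C (x :: xs) ys)).2 key
    show (Levenshtein.impl C (x :: xs) y (suffixLevenshtein C (x :: xs) ys)).1 = _
    rw [key]
    exact congrArg (· :: _) e.symm

@[simp] theorem levenshtein_nil_nil {α β δ : Type*} [AddZeroClass δ] [Min δ]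
    (C : Levenshtein.Cost α β δ) : levenshtein C ([] : List α) ([] : List β) = 0 := rfl

@[simp] theorem levenshtein_nil_cons {α β δ : Type*} [AddZeroClass δ] [Min δ]
    (C : Levenshtein.Cost α β δ) (y : β) (ys : List β) :
    levenshtein C ([] : List α) (y :: ys) = C.insert y + levenshtein C [] ys := by
  have h1 : levenshtein C ([] : List α) (y :: ys) = C.insert y +
      (suffixLevenshtein C ([] : List α) ys).1.getLast
        (List.ne_nil_of_length_pos (suffixLevenshtein C ([] : List α) ys).2) := rfl
  rw [h1, lvp_getLast_eq _ _ _ (lvp_sl_nil C ys)]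

@[simp] theorem levenshtein_cons_nil {α β δ : Type*} [AddZeroClass δ] [Min δ]
    (C : Levenshtein.Cost α β δ) (x : α) (xs : List α) :
    levenshtein C (x :: xs) ([] : List β) = C.delete x + levenshtein C xs [] := rfl

theorem levenshtein_cons_cons {α β δ : Type*} [AddZeroClass δ] [Min δ]
    (C : Levenshtein.Cost α β δ) (x : α) (xs : List α) (y : β) (ys : List β) :
    levenshtein C (x :: xs) (y :: ys) =
      min (C.delete x + levenshtein C xs (y :: ys))
        (min (C.insert y + levenshtein C (x :: xs) ys)
          (C.substitute x y + levenshtein C xs ys)) := by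
  have hD : suffixLevenshtein C (x :: xs) ys =
      ⟨levenshtein C (x :: xs) ys :: (suffixLevenshtein C xs ys).1, by simp⟩ :=
    Subtype.ext (lvp_sl_cons C x xs ys)
  have key : (Levenshtein.impl C (x :: xs) y (suffixLevenshtein C (x :: xs) ys)).1 =
      min (C.delete x + levenshtein C xs (y :: ys))
        (min (C.insert y + levenshtein C (x :: xs) ys) (C.substitute x y + levenshtein C xs ys)) ::
        (suffixLevenshtein C xs (y :: ys)).1 := by
    rw [hD]; exact lvp_impl_cons C x xs y _ _ (by simp) (suffixLevenshtein C xs ys).2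
  exact lvp_head_eq _ _ _ (Levenshtein.impl C (x :: xs) y (suffixLevenshtein C (x :: xs) ys)).2 key

private lemma lev_nil_eq_length {C : Type*} [DecidableEq C] (u : List C) :
    levenshtein Levenshtein.defaultCost u [] = u.length := by
  induction u with
  | nil => simp
  | cons a u ih =>
    rw [levenshtein_cons_nil, ih]
    simp [Levenshtein.defaultCost, Nat.add_comm]

private lemma lev_cons_left_le {C : Type*} [DecidableEq C] (b : C) (u s : List C) :
    levenshtein Levenshtein.defaultCost (b :: u) s ≤
      1 + levenshtein Levenshtein.defaultCost u s := by
  cases s with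
  | nil => simp [Levenshtein.defaultCost]
  | cons c s =>
    rw [levenshtein_cons_cons]
    exact le_trans (min_le_left _ _) (le_refl _)

private lemma lev_cons_right_le {C : Type*} [DecidableEq C] (c : C) (u s : List C) :
    levenshtein Levenshtein.defaultCost u (c :: s) ≤
      1 + levenshtein Levenshtein.defaultCost u s := by
  cases u with
  | nil => simp [Levenshtein.defaultCost]
  | cons b u =>
    rw [levenshtein_cons_cons]
    exact le_trans (min_le_right _ _) (min_le_left _ _)

private lemma lev_subst_le {C : Type*} [DecidableEq C] (b c : C) (u s : List C) :
    levenshtein Levenshtein.defaultCost (b :: u) (c :: s) ≤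
      Levenshtein.defaultCost.substitute b c +
        levenshtein Levenshtein.defaultCost u s := by
  rw [levenshtein_cons_cons]
  exact le_trans (min_le_right _ _) (min_le_right _ _)

/-- Lower-bound half of the optimistic edit-distance formula
(Equation (15)): for every continuation `z` of the prefix `y`, there is
some `0 ≤ k ≤ |t|` such that `ρ_levenshtein(y, t.take k)` (unit costs) is
at most `ρ_levenshtein(y ++ z, t)`; hence
`min_{0 ≤ k ≤ |t|} ρ_levenshtein(y, t.take k) ≤ ρ_levenshtein(y ++ z, t)`. -/
theorem optimistic_loss_lower_bound {C : Type*} [DecidableEq C]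
    (t y z : List C) :
    ∃ k ≤ t.length,
      levenshtein Levenshtein.defaultCost y (t.take k) ≤
        levenshtein Levenshtein.defaultCost (y ++ z) t := by
  induction y generalizing t with
  | nil =>
    exact ⟨0, Nat.zero_le _, by simp⟩
  | cons b y ihy =>
    induction t with
    | nil =>
      refine ⟨0, le_refl _, ?_⟩
      simp only [List.take_zero, lev_nil_eq_length, List.length_append, List.length_cons]
      omega
    | cons c t iht =>
      rw [List.cons_append, levenshtein_cons_cons]
      rcases le_total (Levenshtein.defaultCost.delete b +
          levenshtein Levenshtein.defaultCost (y ++ z) (c :: t))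
          (min (Levenshtein.defaultCost.insert c +
              levenshtein Levenshtein.defaultCost (b :: (y ++ z)) t)
            (Levenshtein.defaultCost.substitute b c +
              levenshtein Levenshtein.defaultCost (y ++ z) t)) with h | h
      · -- delete branch is the min
        obtain ⟨k, hk, hle⟩ := ihy (c :: t)
        refine ⟨k, hk, ?_⟩
        rw [min_eq_left h]
        calc levenshtein Levenshtein.defaultCost (b :: y) ((c :: t).take k)
            ≤ 1 + levenshtein Levenshtein.defaultCost y ((c :: t).take k) :=
              lev_cons_left_le _ _ _
          _ ≤ 1 + levenshtein Levenshtein.defaultCost (y ++ z) (c :: t) := by omega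
          _ = _ := by simp [Levenshtein.defaultCost]
      · rw [min_eq_right h]
        rcases le_total (Levenshtein.defaultCost.insert c +
            levenshtein Levenshtein.defaultCost (b :: (y ++ z)) t)
            (Levenshtein.defaultCost.substitute b c +
              levenshtein Levenshtein.defaultCost (y ++ z) t) with h2 | h2
        · -- insert branch
          obtain ⟨k, hk, hle⟩ := iht
          rw [List.cons_append] at hle
          refine ⟨k + 1, by simpa using hk, ?_⟩
          rw [min_eq_left h2, List.take_succ_cons]
          calc levenshtein Levenshtein.defaultCost (b :: y) (c :: t.take k)
              ≤ 1 + levenshtein Levenshtein.defaultCost (b :: y) (t.take k) :=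
                lev_cons_right_le _ _ _
            _ ≤ 1 + levenshtein Levenshtein.defaultCost (b :: (y ++ z)) t := by omega
            _ = _ := by simp [Levenshtein.defaultCost]
        · -- substitute branch
          obtain ⟨k, hk, hle⟩ := ihy t
          refine ⟨k + 1, by simpa using hk, ?_⟩
          rw [min_eq_right h2, List.take_succ_cons]
          calc levenshtein Levenshtein.defaultCost (b :: y) (c :: t.take k)
              ≤ Levenshtein.defaultCost.substitute b c +
                  levenshtein Levenshtein.defaultCost y (t.take k) :=
                lev_subst_le _ _ _ _
            _ ≤ _ := by omega
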